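/- Let (Ω, F, μ) be a probability space, m a sub-σ-algebra of F, E := MeasureTheory.Lp ℝ ∞ μ with its a.e. order and pointwise-a.e. ring structure, and 1 ∈ E the class of the constant function 1. Let Γ be a nonempty index set, c₀ ∈ ℝ, and (ρ^γ)_{γ∈Γ} a family of maps ρ^γ : E → E such that each ρ^γ is: monotone; cash-subadditive (ρ^γ(X + c) ≤ ρ^γ X + c for every X ∈ E and every m-measurable c ∈ E with c ≥ 0); star-shaped (ρ^γ(λ * X) ≤ λ * ρ^γ X + (1 - λ) * ρ^γ 0 for every X ∈ E and every m-measurable λ ∈ E with 0 ≤ λ ≤ 1); and normalized by ρ^γ 0 = c₀ • 1. Let ρ : E → E satisfy: ρ X ≤ ρ^γ X for all X ∈ E and γ ∈ Γ, and for each X ∈ E there exists γ ∈ Γ with ρ X = ρ^γ X. Then ρ is monotone, cash-subadditive, star-shaped (all in the same sense, with ρ 0 = c₀ • 1), and regular: for every m-measurable set A and every X ∈ E, 1_A * ρ X = 1_A * ρ (1_A * X), where 1_A ∈ E is the class of the indicator of A. -/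

import Mathlib

open MeasureTheory
open scoped ENNReal

/-- The constant function `1` as an element of `L∞`. -/
noncomputable def LinfOne {Ω : Type*} [MeasurableSpace Ω] (μ : Measure Ω) : Lp ℝ ⊤ μ :=
  (memLp_top_const (1 : ℝ)).toLp fun _ => (1 : ℝ)

/-- Pointwise-a.e. multiplication on `L∞` (well defined since essentially bounded functions
are closed under products). -/
noncomputable def LinfMul {Ω : Type*} [MeasurableSpace Ω] {μ : Measure Ω}
    (f g : Lp ℝ ⊤ μ) : Lp ℝ ⊤ μ :=
  ((Lp.memLp g).smul (r := ⊤) (Lp.memLp f)).toLp ((f : Ω → ℝ) • (g : Ω → ℝ))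

section Aux

variable {Ω : Type*} {m mΩ : MeasurableSpace Ω} {μ : Measure Ω}

lemma LinfMul_coeFn (f g : Lp ℝ ⊤ μ) :
    (LinfMul f g : Ω → ℝ) =ᵐ[μ] fun x => f x * g x := by
  filter_upwards [MemLp.coeFn_toLp ((Lp.memLp g).smul (r := ⊤) (Lp.memLp f))] with x hx
  rw [LinfMul, hx]
  rfl

lemma LinfOne_coeFn : (LinfOne μ : Ω → ℝ) =ᵐ[μ] fun _ => (1 : ℝ) :=
  MemLp.coeFn_toLp _

lemma LinfMul_mono {h f g : Lp ℝ ⊤ μ} (hh : 0 ≤ h) (hfg : f ≤ g) :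
    LinfMul h f ≤ LinfMul h g := by
  rw [← Lp.coeFn_le]
  filter_upwards [LinfMul_coeFn h f, LinfMul_coeFn h g, (Lp.coeFn_le f g).mpr hfg,
    (Lp.coeFn_nonneg h).mpr hh] with x h1 h2 h3 h4
  rw [h1, h2]
  exact mul_le_mul_of_nonneg_left h3 h4

lemma ae_norm_le_norm (f : Lp ℝ ⊤ μ) : ∀ᵐ x ∂μ, ‖f x‖ ≤ ‖f‖ := by
  have hfin : eLpNorm (f : Ω → ℝ) ⊤ μ ≠ ⊤ := (Lp.eLpNorm_lt_top f).ne
  filter_upwards [ae_le_eLpNormEssSup (f := (f : Ω → ℝ)) (μ := μ)] with x hx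
  rw [Lp.norm_def]
  calc ‖f x‖ = ((‖f x‖₊ : ℝ≥0∞)).toReal := by simp
    _ ≤ (eLpNorm (f : Ω → ℝ) ⊤ μ).toReal := by
        apply ENNReal.toReal_mono hfin
        rwa [eLpNorm_exponent_top]

variable [IsFiniteMeasure μ]

/-- Regularity of a single monotone, cash-subadditive, star-shaped map. -/
lemma reg_single (hm : m ≤ mΩ) (r : Lp ℝ ⊤ μ → Lp ℝ ⊤ μ)
    (hmono : Monotone r)
    (hcs : ∀ X c : Lp ℝ ⊤ μ, 0 ≤ c → AEStronglyMeasurable[m] (c : Ω → ℝ) μ →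
      r (X + c) ≤ r X + c)
    (hss : ∀ X lam : Lp ℝ ⊤ μ, 0 ≤ lam → lam ≤ LinfOne μ →
      AEStronglyMeasurable[m] (lam : Ω → ℝ) μ →
      r (LinfMul lam X) ≤ LinfMul lam (r X) + LinfMul (LinfOne μ - lam) (r 0))
    (A : Set Ω) (hA : MeasurableSet[m] A) (X : Lp ℝ ⊤ μ) :
    LinfMul (indicatorConstLp ⊤ (hm A hA) (measure_ne_top μ A) (1 : ℝ)) (r X) =
      LinfMul (indicatorConstLp ⊤ (hm A hA) (measure_ne_top μ A) (1 : ℝ))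
        (r (LinfMul (indicatorConstLp ⊤ (hm A hA) (measure_ne_top μ A) (1 : ℝ)) X)) := by
  set e : Lp ℝ ⊤ μ := indicatorConstLp ⊤ (hm A hA) (measure_ne_top μ A) (1 : ℝ) with he
  have he_coe : (e : Ω → ℝ) =ᵐ[μ] A.indicator fun _ => (1 : ℝ) := indicatorConstLp_coeFn
  have he0 : 0 ≤ e := by
    rw [← Lp.coeFn_nonneg]
    filter_upwards [he_coe] with x hx
    rw [hx]
    exact Set.indicator_nonneg (fun _ _ => zero_le_one) x
  have he1 : e ≤ LinfOne μ := by
    rw [← Lp.coeFn_le]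
    filter_upwards [he_coe, LinfOne_coeFn (μ := μ)] with x hx h1
    rw [hx, h1]
    exact Set.indicator_le_self' (fun _ _ => zero_le_one) x
  have hem : AEStronglyMeasurable[m] (e : Ω → ℝ) μ :=
    ⟨A.indicator fun _ => (1 : ℝ),
      (stronglyMeasurable_const : StronglyMeasurable[m] fun _ => (1 : ℝ)).indicator hA,
      he_coe⟩
  set Y : Lp ℝ ⊤ μ := LinfMul e X with hY
  -- the cash term
  set c : Lp ℝ ⊤ μ :=
    ‖X‖ • indicatorConstLp ⊤ (hm Aᶜ hA.compl) (measure_ne_top μ Aᶜ) (1 : ℝ) with hc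
  have hc_coe : (c : Ω → ℝ) =ᵐ[μ] fun x => ‖X‖ * Aᶜ.indicator (fun _ => (1 : ℝ)) x := by
    filter_upwards [Lp.coeFn_smul ‖X‖ (indicatorConstLp ⊤ (hm Aᶜ hA.compl)
      (measure_ne_top μ Aᶜ) (1 : ℝ)), indicatorConstLp_coeFn (p := (⊤ : ℝ≥0∞))
      (hs := hm Aᶜ hA.compl) (hμs := measure_ne_top μ Aᶜ) (c := (1 : ℝ))] with x h1 h2
    rw [h1, Pi.smul_apply, h2, smul_eq_mul]
  have hc0 : 0 ≤ c := by
    rw [← Lp.coeFn_nonneg]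
    filter_upwards [hc_coe] with x hx
    rw [hx]
    exact mul_nonneg (norm_nonneg _) (Set.indicator_nonneg (fun _ _ => zero_le_one) x)
  have hcm : AEStronglyMeasurable[m] (c : Ω → ℝ) μ :=
    ⟨fun x => ‖X‖ * Aᶜ.indicator (fun _ => (1 : ℝ)) x,
      ((stronglyMeasurable_const : StronglyMeasurable[m] fun _ => (1 : ℝ)).indicator
        hA.compl).const_mul ‖X‖, hc_coe⟩
  have hXle : X ≤ Y + c := by
    rw [← Lp.coeFn_le]
    filter_upwards [Lp.coeFn_add Y c, LinfMul_coeFn e X, he_coe, hc_coe,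
      ae_norm_le_norm X] with x h1 h2 h3 h4 h5
    rw [h1, Pi.add_apply, h2, h3, h4]
    by_cases hxA : x ∈ A
    · rw [Set.indicator_of_mem hxA, Set.indicator_of_notMem (Set.notMem_compl_iff.mpr hxA)]
      simp
    · rw [Set.indicator_of_notMem hxA, Set.indicator_of_mem (Set.mem_compl hxA)]
      simp only [zero_mul, mul_one, zero_add]
      exact (le_abs_self _).trans h5
  -- direction ≤
  have hle : LinfMul e (r X) ≤ LinfMul e (r Y) := by
    have h1 : r X ≤ r Y + c := (hmono hXle).trans (hcs Y c hc0 hcm)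
    refine (LinfMul_mono he0 h1).trans ?_
    rw [← Lp.coeFn_le]
    filter_upwards [LinfMul_coeFn e (r Y + c), LinfMul_coeFn e (r Y),
      Lp.coeFn_add (r Y) c, he_coe, hc_coe] with x h1 h2 h3 h4 h5
    rw [h1, h2, h3, Pi.add_apply, h4, h5]
    by_cases hxA : x ∈ A
    · rw [Set.indicator_of_mem hxA, Set.indicator_of_notMem (Set.notMem_compl_iff.mpr hxA)]
      simp
    · rw [Set.indicator_of_notMem hxA]
      simp
  -- direction ≥
  have hge : LinfMul e (r Y) ≤ LinfMul e (r X) := by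
    have h1 : r Y ≤ LinfMul e (r X) + LinfMul (LinfOne μ - e) (r 0) := hss X e he0 he1 hem
    refine (LinfMul_mono he0 h1).trans ?_
    rw [← Lp.coeFn_le]
    filter_upwards [LinfMul_coeFn e (LinfMul e (r X) + LinfMul (LinfOne μ - e) (r 0)),
      LinfMul_coeFn e (r X), Lp.coeFn_add (LinfMul e (r X)) (LinfMul (LinfOne μ - e) (r 0)),
      LinfMul_coeFn (LinfOne μ - e) (r 0), Lp.coeFn_sub (LinfOne μ) e,
      LinfOne_coeFn (μ := μ), he_coe] with x h1 h2 h3 h4 h5 h6 h7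
    simp only [h1, h2, h3, Pi.add_apply, h2, h4, h5, Pi.sub_apply, h6, h7]
    by_cases hxA : x ∈ A
    · simp [Set.indicator_of_mem hxA]
    · simp [Set.indicator_of_notMem hxA]
  exact le_antisymm hle hge

end Aux

/-- an attained pointwise minimum of monotone, cash-subadditive, star-shaped
dynamic risk measures (all normalized at `c₀ • 1`) is monotone, cash-subadditive, star-shaped,
normalized at `c₀ • 1`, and regular. -/
theorem stmt_13 {Ω : Type*} {m mΩ : MeasurableSpace Ω} (hm : m ≤ mΩ)
    (μ : Measure Ω) [IsProbabilityMeasure μ]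
    {Γ : Type*} [Nonempty Γ] (c₀ : ℝ)
    (ρ' : Γ → Lp ℝ ⊤ μ → Lp ℝ ⊤ μ)
    (hmono : ∀ γ : Γ, Monotone (ρ' γ))
    (hcs : ∀ γ : Γ, ∀ X c : Lp ℝ ⊤ μ, 0 ≤ c → AEStronglyMeasurable[m] (c : Ω → ℝ) μ →
      ρ' γ (X + c) ≤ ρ' γ X + c)
    (hss : ∀ γ : Γ, ∀ X lam : Lp ℝ ⊤ μ, 0 ≤ lam → lam ≤ LinfOne μ →
      AEStronglyMeasurable[m] (lam : Ω → ℝ) μ →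
      ρ' γ (LinfMul lam X) ≤
        LinfMul lam (ρ' γ X) + LinfMul (LinfOne μ - lam) (ρ' γ 0))
    (hnorm : ∀ γ : Γ, ρ' γ 0 = c₀ • LinfOne μ)
    (ρ : Lp ℝ ⊤ μ → Lp ℝ ⊤ μ)
    (hmin : ∀ X : Lp ℝ ⊤ μ, ∀ γ : Γ, ρ X ≤ ρ' γ X)
    (hatt : ∀ X : Lp ℝ ⊤ μ, ∃ γ : Γ, ρ X = ρ' γ X) :
    Monotone ρ ∧
      (∀ X c : Lp ℝ ⊤ μ, 0 ≤ c → AEStronglyMeasurable[m] (c : Ω → ℝ) μ →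
        ρ (X + c) ≤ ρ X + c) ∧
      (∀ X lam : Lp ℝ ⊤ μ, 0 ≤ lam → lam ≤ LinfOne μ →
        AEStronglyMeasurable[m] (lam : Ω → ℝ) μ →
        ρ (LinfMul lam X) ≤ LinfMul lam (ρ X) + LinfMul (LinfOne μ - lam) (ρ 0)) ∧
      ρ 0 = c₀ • LinfOne μ ∧
      (∀ A : Set Ω, ∀ (hA : MeasurableSet[m] A), ∀ X : Lp ℝ ⊤ μ,
        LinfMul (indicatorConstLp ⊤ (hm A hA) (measure_ne_top μ A) (1 : ℝ)) (ρ X) =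
          LinfMul (indicatorConstLp ⊤ (hm A hA) (measure_ne_top μ A) (1 : ℝ))
            (ρ (LinfMul (indicatorConstLp ⊤ (hm A hA) (measure_ne_top μ A) (1 : ℝ)) X))) := by
  have hnorm0 : ρ 0 = c₀ • LinfOne μ := by
    obtain ⟨γ, hγ⟩ := hatt 0
    rw [hγ, hnorm γ]
  refine ⟨?_, ?_, ?_, hnorm0, ?_⟩
  · -- monotone
    intro X Y hXY
    obtain ⟨γ, hγ⟩ := hatt Y
    rw [hγ]
    exact (hmin X γ).trans (hmono γ hXY)
  · -- cash-subadditive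
    intro X c hc0 hcm
    obtain ⟨γ, hγ⟩ := hatt X
    rw [hγ]
    exact (hmin (X + c) γ).trans (hcs γ X c hc0 hcm)
  · -- star-shaped
    intro X lam h0 h1 hmeas
    obtain ⟨γ, hγ⟩ := hatt X
    rw [hγ, hnorm0, ← hnorm γ]
    exact (hmin (LinfMul lam X) γ).trans (hss γ X lam h0 h1 hmeas)
  · -- regular
    intro A hA X
    set e : Lp ℝ ⊤ μ := indicatorConstLp ⊤ (hm A hA) (measure_ne_top μ A) (1 : ℝ) with he
    have he0 : 0 ≤ e := by
      rw [← Lp.coeFn_nonneg]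
      filter_upwards [indicatorConstLp_coeFn (p := (⊤ : ℝ≥0∞)) (hs := hm A hA)
        (hμs := measure_ne_top μ A) (c := (1 : ℝ))] with x hx
      rw [hx]
      exact Set.indicator_nonneg (fun _ _ => zero_le_one) x
    obtain ⟨γ₁, hγ₁⟩ := hatt X
    obtain ⟨γ₂, hγ₂⟩ := hatt (LinfMul e X)
    have hreg₁ := reg_single hm (ρ' γ₁) (hmono γ₁) (hcs γ₁) (hss γ₁) A hA X
    have hreg₂ := reg_single hm (ρ' γ₂) (hmono γ₂) (hcs γ₂) (hss γ₂) A hA X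
    refine le_antisymm ?_ ?_
    · calc LinfMul e (ρ X) ≤ LinfMul e (ρ' γ₂ X) := LinfMul_mono he0 (hmin _ γ₂)
        _ = LinfMul e (ρ' γ₂ (LinfMul e X)) := hreg₂
        _ = LinfMul e (ρ (LinfMul e X)) := by rw [hγ₂]
    · calc LinfMul e (ρ (LinfMul e X)) ≤ LinfMul e (ρ' γ₁ (LinfMul e X)) :=
            LinfMul_mono he0 (hmin _ γ₁)
        _ = LinfMul e (ρ' γ₁ X) := hreg₁.symm
        _ = LinfMul e (ρ X) := by rw [hγ₁]
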